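/- arXiv:1609.07919 — 5 statements merged into one kernel-verified Lean document; each statement's English description precedes it below -/
import Mathlib

section
/- Let m be an even positive integer and let A and B be m-th order n-dimensional real symmetric Z-tensors. If A ≤ B entrywise (i.e., a_{i_1...i_m} ≤ b_{i_1...i_m} for all indices) and A is positive semi-definite, then B is positive semi-definite. -/
open scoped BigOperators

/-- `A x^m`: the homogeneous form of an `m`-th order `n`-dimensional tensor. -/
def tApply {m n : ℕ} (A : (Fin m → Fin n) → ℝ) (x : Fin n → ℝ) : ℝ :=
  ∑ i : Fin m → Fin n, A i * ∏ t, x (i t)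

/-- A tensor is symmetric if its entries are invariant under permutations of indices. -/
def IsSymT {m n : ℕ} (A : (Fin m → Fin n) → ℝ) : Prop :=
  ∀ (σ : Equiv.Perm (Fin m)) (i : Fin m → Fin n), A (i ∘ σ) = A i

/-- A `Z`-tensor: all off-diagonal entries are nonpositive. -/
def IsZTensor {m n : ℕ} (A : (Fin m → Fin n) → ℝ) : Prop :=
  ∀ i : Fin m → Fin n, (∃ s t, i s ≠ i t) → A i ≤ 0

/-- Positive semi-definiteness (for even order): `A x^m ≥ 0` for all `x ∈ ℝ^n`. -/
def PSDT {m n : ℕ} (A : (Fin m → Fin n) → ℝ) : Prop :=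
  ∀ x : Fin n → ℝ, 0 ≤ tApply A x

theorem stmt6 (m n : ℕ) (hm : Even m) (hm0 : 0 < m)
    (A B : (Fin m → Fin n) → ℝ) (hA : IsSymT A) (hB : IsSymT B)
    (hZA : IsZTensor A) (hZB : IsZTensor B)
    (hle : ∀ i : Fin m → Fin n, A i ≤ B i) (hpsd : PSDT A) :
    PSDT B := by
  intro x
  have key : tApply A (fun j => |x j|) ≤ tApply B x := by
    apply Finset.sum_le_sum
    intro i _
    have habs : ∏ t, |x (i t)| = |∏ t, x (i t)| := (Finset.abs_prod _ _).symm
    by_cases hc : ∃ s t, i s ≠ i t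
    · have hB0 := hZB i hc
      calc A i * ∏ t, |x (i t)|
          ≤ B i * ∏ t, |x (i t)| :=
            mul_le_mul_of_nonneg_right (hle i)
              (Finset.prod_nonneg fun t _ => abs_nonneg _)
        _ ≤ B i * ∏ t, x (i t) := by
            rw [habs]
            exact mul_le_mul_of_nonpos_left (le_abs_self _) hB0
    · push_neg at hc
      set c := i ⟨0, hm0⟩ with hcdef
      have h1 : ∏ t, x (i t) = x c ^ m := by
        rw [Finset.prod_congr rfl fun t _ => by rw [hc t ⟨0, hm0⟩]]
        simp
        rfl
      have h2 : ∏ t, |x (i t)| = |x c| ^ m := by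
        rw [Finset.prod_congr rfl fun t _ => by rw [hc t ⟨0, hm0⟩]]
        simp
        rfl
      rw [h1, h2, hm.pow_abs]
      exact mul_le_mul_of_nonneg_right (hle i) (hm.pow_nonneg _)
  exact le_trans (hpsd fun j => |x j|) key
end

section
/- Let m be an even positive integer and define H_1 = {A : A is an m-th order n-dimensional real symmetric tensor with A − N(A) positive semi-definite}. Then H_1 is a convex cone of symmetric tensors, and N^+_{m,n} ⊆ H_1 ⊆ COP_{m,n}, where N^+_{m,n} is the set of m-th order n-dimensional symmetric tensors with all entries nonnegative and COP_{m,n} is the set of m-th order n-dimensional symmetric copositive tensors. -/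
open scoped BigOperators

/-- Copositivity: `A x^m ≥ 0` for all `x` in the nonnegative orthant. -/
def Copositive {m n : ℕ} (A : (Fin m → Fin n) → ℝ) : Prop :=
  ∀ x : Fin n → ℝ, (∀ j, 0 ≤ x j) → 0 ≤ tApply A x

/-- `N(A)`: keeps the positive off-diagonal entries of `A` and sets all the other
entries to `0`. -/
noncomputable def NPart {m n : ℕ} (A : (Fin m → Fin n) → ℝ) : (Fin m → Fin n) → ℝ :=
  fun i => if 0 < A i ∧ (∃ s t, i s ≠ i t) then A i else 0

lemma NPart_nonneg' {m n : ℕ} (A : (Fin m → Fin n) → ℝ) (i : Fin m → Fin n) :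
    0 ≤ NPart A i := by
  unfold NPart; split_ifs with h
  · exact le_of_lt h.1
  · exact le_refl 0

lemma NPart_ge' {m n : ℕ} (A : (Fin m → Fin n) → ℝ) (i : Fin m → Fin n)
    (h : ∃ s t, i s ≠ i t) : A i ≤ NPart A i := by
  unfold NPart; split_ifs with h'
  · exact le_refl _
  · push_neg at h'
    rcases lt_or_ge 0 (A i) with hlt | hle
    · obtain ⟨s, t, hst⟩ := h
      exact absurd (h' hlt s t) hst
    · exact hle

lemma tApply_sub' {m n : ℕ} (A B : (Fin m → Fin n) → ℝ) (x : Fin n → ℝ) :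
    tApply (A - B) x = tApply A x - tApply B x := by
  simp only [tApply, Pi.sub_apply, sub_mul]
  exact Finset.sum_sub_distrib ..

lemma tApply_mono' {m n : ℕ} {D E : (Fin m → Fin n) → ℝ} {x : Fin n → ℝ}
    (h : ∀ i, D i ≤ E i) (hx : ∀ j, 0 ≤ x j) : tApply D x ≤ tApply E x := by
  apply Finset.sum_le_sum
  intro i _
  exact mul_le_mul_of_nonneg_right (h i) (Finset.prod_nonneg fun t _ => hx _)

/-- If `D` has nonpositive off-diagonal entries and `m` is even, then
`D |x|^m ≤ D x^m`. -/
lemma tApply_abs_le' {m n : ℕ} (hm : Even m) (hm0 : 0 < m)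
    {D : (Fin m → Fin n) → ℝ} (hD : ∀ i, (∃ s t, i s ≠ i t) → D i ≤ 0)
    (x : Fin n → ℝ) : tApply D (fun j => |x j|) ≤ tApply D x := by
  apply Finset.sum_le_sum
  intro i _
  by_cases hc : ∃ s t, i s ≠ i t
  · have h1 : ∏ t, x (i t) ≤ ∏ t, |x (i t)| := by
      calc ∏ t, x (i t) ≤ |∏ t, x (i t)| := le_abs_self _
        _ = ∏ t, |x (i t)| := Finset.abs_prod _ _
    exact mul_le_mul_of_nonpos_left h1 (hD i hc)
  · push_neg at hc
    have hconst : ∀ t, i t = i ⟨0, hm0⟩ := fun t => by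
      by_contra h; exact h (hc t ⟨0, hm0⟩ ▸ rfl)
    have h2 : ∏ t, x (i t) = x (i ⟨0, hm0⟩) ^ m := by
      rw [Finset.prod_congr rfl fun t _ => by rw [hconst t]]
      simp [Finset.prod_const, Finset.card_univ]
    have h3 : ∏ t, |x (i t)| = |x (i ⟨0, hm0⟩)| ^ m := by
      rw [Finset.prod_congr rfl fun t _ => by rw [hconst t]]
      simp [Finset.prod_const, Finset.card_univ]
    rw [h2, h3, hm.pow_abs]

/-- The key closure property: a nonnegative combination of tensors in `H_1`
has PSD `A - N(A)` part. -/
lemma psd_comb' {m n : ℕ} (hm : Even m) (hm0 : 0 < m)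
    (A B : (Fin m → Fin n) → ℝ) (a b : ℝ) (ha : 0 ≤ a) (hb : 0 ≤ b)
    (hA : PSDT (A - NPart A)) (hB : PSDT (B - NPart B)) :
    PSDT (a • A + b • B - NPart (a • A + b • B)) := by
  intro x
  set C : (Fin m → Fin n) → ℝ := a • A + b • B with hC
  have hCval : ∀ i, C i = a * A i + b * B i := fun i => rfl
  set y : Fin n → ℝ := fun j => |x j| with hy
  have hy0 : ∀ j, 0 ≤ y j := fun j => abs_nonneg _
  have hoff : ∀ i, (∃ s t, i s ≠ i t) → (C - NPart C) i ≤ 0 := by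
    intro i h
    have := NPart_ge' C i h
    simp only [Pi.sub_apply]; linarith
  have step1 : tApply (C - NPart C) y ≤ tApply (C - NPart C) x :=
    tApply_abs_le' hm hm0 hoff x
  have hle : ∀ i, NPart C i ≤ a * NPart A i + b * NPart B i := by
    intro i
    have h1 := NPart_nonneg' A i
    have h2 := NPart_nonneg' B i
    by_cases h : 0 < C i ∧ ∃ s t, i s ≠ i t
    · have hA' := NPart_ge' A i h.2
      have hB' := NPart_ge' B i h.2
      have hNC : NPart C i = C i := by unfold NPart; rw [if_pos h]
      rw [hNC, hCval i]
      have := mul_le_mul_of_nonneg_left hA' ha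
      have := mul_le_mul_of_nonneg_left hB' hb
      linarith
    · have hNC : NPart C i = 0 := by unfold NPart; rw [if_neg h]
      rw [hNC]
      have := mul_nonneg ha h1
      have := mul_nonneg hb h2
      linarith
  have step2 : tApply (NPart C) y ≤ tApply (fun i => a * NPart A i + b * NPart B i) y :=
    tApply_mono' hle hy0
  have expand : tApply C y - tApply (fun i => a * NPart A i + b * NPart B i) y
      = a * tApply (A - NPart A) y + b * tApply (B - NPart B) y := by
    simp only [tApply, Pi.sub_apply, Finset.mul_sum]
    rw [← Finset.sum_sub_distrib, ← Finset.sum_add_distrib]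
    apply Finset.sum_congr rfl
    intro i _
    rw [hCval i]
    ring
  have hAy := hA y
  have hBy := hB y
  have hsub : tApply (C - NPart C) y = tApply C y - tApply (NPart C) y :=
    tApply_sub' C (NPart C) y
  have h4 : 0 ≤ a * tApply (A - NPart A) y + b * tApply (B - NPart B) y := by
    have := mul_nonneg ha hAy
    have := mul_nonneg hb hBy
    linarith
  linarith

theorem stmt7 (m n : ℕ) (hm : Even m) (hm0 : 0 < m)
    (H1 : Set ((Fin m → Fin n) → ℝ))
    (hH1 : H1 = {A | IsSymT A ∧ PSDT (A - NPart A)}) :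
    Convex ℝ H1 ∧ (∀ (c : ℝ), 0 ≤ c → ∀ A ∈ H1, c • A ∈ H1) ∧
      {A : (Fin m → Fin n) → ℝ | IsSymT A ∧ ∀ i, 0 ≤ A i} ⊆ H1 ∧
      H1 ⊆ {A : (Fin m → Fin n) → ℝ | IsSymT A ∧ Copositive A} := by
  subst hH1
  refine ⟨?_, ?_, ?_, ?_⟩
  · -- Convexity
    intro A hA B hB a b ha hb _
    refine ⟨?_, psd_comb' hm hm0 A B a b ha hb hA.2 hB.2⟩
    intro σ i
    simp only [Pi.add_apply, Pi.smul_apply, smul_eq_mul, hA.1 σ i, hB.1 σ i]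
  · -- Cone
    intro c hc A hA
    have heq : c • A = c • A + (0 : ℝ) • A := by
      funext i; simp
    constructor
    · intro σ i
      simp only [Pi.smul_apply, smul_eq_mul, hA.1 σ i]
    · rw [heq]
      exact psd_comb' hm hm0 A A c 0 hc le_rfl hA.2 hA.2
  · -- N+ ⊆ H1
    intro A hA
    refine ⟨hA.1, ?_⟩
    intro x
    apply Finset.sum_nonneg
    intro i _
    by_cases hc : ∃ s t, i s ≠ i t
    · have h0 : (A - NPart A) i = 0 := by
        simp only [Pi.sub_apply]
        unfold NPart
        split_ifs with h'
        · ring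
        · push_neg at h'
          have h1 : ¬ 0 < A i := fun hlt => by
            obtain ⟨s, t, hst⟩ := hc
            exact hst (h' hlt s t)
          have := hA.2 i
          have : A i = 0 := le_antisymm (not_lt.mp h1) this
          simp [this]
      rw [h0, zero_mul]
    · push_neg at hc
      have hconst : ∀ t, i t = i ⟨0, hm0⟩ := fun t => by
        by_contra h; exact h (hc t ⟨0, hm0⟩ ▸ rfl)
      have hN : NPart A i = 0 := by
        unfold NPart
        rw [if_neg]
        rintro ⟨-, s, t, hst⟩
        exact hst (hc s t)
      have h2 : ∏ t, x (i t) = x (i ⟨0, hm0⟩) ^ m := by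
        rw [Finset.prod_congr rfl fun t _ => by rw [hconst t]]
        simp [Finset.prod_const, Finset.card_univ]
      have hentry : (A - NPart A) i = A i := by
        simp [Pi.sub_apply, hN]
      rw [hentry, h2]
      exact mul_nonneg (hA.2 i) (hm.pow_nonneg _)
  · -- H1 ⊆ COP
    intro A hA
    refine ⟨hA.1, ?_⟩
    intro x hx
    have h1 := hA.2 x
    rw [tApply_sub'] at h1
    have h2 : 0 ≤ tApply (NPart A) x := by
      apply Finset.sum_nonneg
      intro i _
      exact mul_nonneg (NPart_nonneg' A i) (Finset.prod_nonneg fun t _ => hx _)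
    linarith
end

section
/- Let G = (V, E) be a nontrivial m-uniform hypergraph with |V| = n, where m ≥ 3 and n ≥ m, and let ω(G) denote its coclique number. Then ω(G)^{m−1} equals the maximum of ⟨X, E_tensor⟩ over all m-th order n-dimensional completely positive tensors X satisfying X_{i_1...i_m} = 0 whenever {i_1,...,i_m} ∈ E and ⟨X, I⟩ = 1, where E_tensor is the all-ones tensor and I is the identity tensor; moreover this maximum is attained. -/
open scoped BigOperators

/-- A coclique of an `m`-uniform hypergraph with edge set `E`: a set of vertices no
`m`-element subset of which is an edge. -/
def IsCoclique {n : ℕ} (m : ℕ) (E : Finset (Finset (Fin n))) (S : Finset (Fin n)) : Prop :=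
  ∀ T : Finset (Fin n), T ⊆ S → T.card = m → T ∉ E

/-- Inner product of two tensors. -/
def tInner {m n : ℕ} (A B : (Fin m → Fin n) → ℝ) : ℝ :=
  ∑ i : Fin m → Fin n, A i * B i

/-- A completely positive tensor: a finite sum of symmetric rank-one tensors
`u ∘ u ∘ ⋯ ∘ u` with `u ∈ ℝ^n_+`. -/
def CompletelyPositive {m n : ℕ} (X : (Fin m → Fin n) → ℝ) : Prop :=
  ∃ (N : ℕ) (u : Fin N → Fin n → ℝ), (∀ p j, 0 ≤ u p j) ∧
    ∀ i : Fin m → Fin n, X i = ∑ p, ∏ t, u p (i t)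

/-- The identity tensor: entry `1` on the diagonal, `0` elsewhere. -/
def idT (m n : ℕ) : (Fin m → Fin n) → ℝ :=
  fun i => if ∀ s t, i s = i t then 1 else 0

lemma pow_sum_eq {m n : ℕ} (f : Fin n → ℝ) :
    (∑ j, f j) ^ m = ∑ i : Fin m → Fin n, ∏ t, f (i t) := by
  classical
  rw [← Fintype.piFinset_univ, ← Finset.prod_univ_sum]
  simp

lemma key_ineq {n : ℕ} (m ω : ℕ) (hm : 0 < m) (u : Fin n → ℝ) (hu : ∀ j, 0 ≤ u j)
    (hcard : (Finset.univ.filter (fun j => u j ≠ 0)).card ≤ ω) :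
    (∑ j, u j) ^ m ≤ (ω : ℝ) ^ (m - 1) * ∑ j, u j ^ m := by
  classical
  set s := Finset.univ.filter (fun j : Fin n => u j ≠ 0) with hs
  have h1 : ∑ j, u j = ∑ j ∈ s, u j := (Finset.sum_filter_ne_zero _).symm
  have h2 : ∑ j ∈ s, u j ^ m ≤ ∑ j, u j ^ m :=
    Finset.sum_le_sum_of_subset_of_nonneg (Finset.subset_univ s)
      (fun j _ _ => pow_nonneg (hu j) m)
  have key : (∑ j ∈ s, u j) ^ m ≤ (s.card : ℝ) ^ (m - 1) * ∑ j ∈ s, u j ^ m := by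
    obtain ⟨k, rfl⟩ : ∃ k, m = k + 1 := ⟨m - 1, (Nat.succ_pred_eq_of_pos hm).symm⟩
    simpa using pow_sum_le_card_mul_sum_pow (fun j _ => hu j) k
  calc (∑ j, u j) ^ m = (∑ j ∈ s, u j) ^ m := by rw [h1]
    _ ≤ (s.card : ℝ) ^ (m - 1) * ∑ j ∈ s, u j ^ m := key
    _ ≤ (ω : ℝ) ^ (m - 1) * ∑ j, u j ^ m := by
        apply mul_le_mul
        · exact pow_le_pow_left₀ (by positivity) (by exact_mod_cast hcard) _
        · exact h2
        · exact Finset.sum_nonneg fun j _ => pow_nonneg (hu j) m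
        · positivity

lemma tInner_idT {m n : ℕ} (hm : 0 < m) (X : (Fin m → Fin n) → ℝ) :
    tInner X (idT m n) = ∑ j : Fin n, X (fun _ => j) := by
  classical
  unfold tInner idT
  simp only [mul_ite, mul_one, mul_zero]
  rw [← Finset.sum_filter]
  refine Finset.sum_nbij' (fun i => i ⟨0, hm⟩) (fun j => fun _ => j) ?_ ?_ ?_ ?_ ?_
  · intro a _; exact Finset.mem_univ _
  · intro j _
    simp only [Finset.mem_filter, Finset.mem_univ, true_and]
    exact fun _ _ => trivial
  · intro a ha
    simp only [Finset.mem_filter, Finset.mem_univ, true_and] at ha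
    funext t; exact ha _ _
  · intro j _; rfl
  · intro a ha
    simp only [Finset.mem_filter, Finset.mem_univ, true_and] at ha
    congr 1; funext t; exact ha _ _

lemma image_orderIso {n m : ℕ} (T : Finset (Fin n)) (h : T.card = m) :
    Finset.image (fun t => ((T.orderIsoOfFin h) t : Fin n)) Finset.univ = T := by
  apply Finset.Subset.antisymm
  · intro x hx
    simp only [Finset.mem_image] at hx
    obtain ⟨t, _, ht⟩ := hx
    rw [← ht]; exact (T.orderIsoOfFin h t).2
  · intro x hx
    simp only [Finset.mem_image]
    exact ⟨(T.orderIsoOfFin h).symm ⟨x, hx⟩, Finset.mem_univ _, by simp⟩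

theorem stmt12 (m n : ℕ) (hm : 3 ≤ m) (hn : m ≤ n)
    (E : Finset (Finset (Fin n))) (hunif : ∀ e ∈ E, e.card = m) (hne : E.Nonempty)
    (ω : ℕ)
    (hω : IsGreatest {k | ∃ S : Finset (Fin n), IsCoclique m E S ∧ S.card = k} ω) :
    IsGreatest
      {v : ℝ | ∃ X : (Fin m → Fin n) → ℝ, CompletelyPositive X ∧
        (∀ i : Fin m → Fin n, Finset.image i Finset.univ ∈ E → X i = 0) ∧
        tInner X (idT m n) = 1 ∧ v = tInner X (fun _ => 1)}
      ((ω : ℝ) ^ (m - 1)) := by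
  classical
  have hm1 : 0 < m := by omega
  have hn0 : 0 < n := by omega
  -- ω ≥ 1
  have hω1 : 1 ≤ ω := by
    apply hω.2
    refine ⟨{⟨0, hn0⟩}, ?_, Finset.card_singleton _⟩
    intro T hT hTc
    have := Finset.card_le_card hT
    simp only [Finset.card_singleton] at this
    exact absurd hTc (by omega)
  have hω0 : (0:ℝ) < (ω : ℝ) := by exact_mod_cast hω1
  constructor
  · -- membership: build the optimal tensor from a maximum coclique
    obtain ⟨S, hS, hScard⟩ := hω.1
    set a : ℝ := (ω : ℝ) ^ (-1 / (m : ℝ)) with ha_def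
    have ha : 0 ≤ a := Real.rpow_nonneg hω0.le _
    have hm0 : (m : ℝ) ≠ 0 := by positivity
    have ham : a ^ m = ((ω : ℝ))⁻¹ := by
      rw [ha_def, ← Real.rpow_natCast ((ω : ℝ) ^ (-1 / (m : ℝ))) m,
        ← Real.rpow_mul hω0.le, div_mul_cancel₀ _ hm0, Real.rpow_neg_one]
    set f : Fin n → ℝ := fun j => if j ∈ S then a else 0 with hf_def
    refine ⟨fun i => ∑ _p : Fin 1, ∏ t, f (i t), ⟨1, fun _ => f, fun _ j => ?_, fun i => rfl⟩,
      ?_, ?_, ?_⟩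
    · simp only [hf_def]; split <;> simp [ha]
    · -- vanishes on edges
      intro i hi
      have hcard : (Finset.image i Finset.univ).card = m := hunif _ hi
      have hnotsub : ¬ (Finset.image i Finset.univ ⊆ S) := fun hsub =>
        hS _ hsub hcard hi
      obtain ⟨x, hxmem, hxS⟩ := Finset.not_subset.mp hnotsub
      obtain ⟨t, _, ht⟩ := Finset.mem_image.mp hxmem
      apply Finset.sum_eq_zero
      intro p _
      apply Finset.prod_eq_zero (Finset.mem_univ t)
      rw [ht]; simp [hf_def, hxS]
    · -- trace condition
      rw [tInner_idT hm1]
      have : ∀ j : Fin n, (∑ _p : Fin 1, ∏ _t : Fin m, f j) = if j ∈ S then a ^ m else 0 := by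
        intro j
        simp only [Finset.sum_const, Finset.card_univ, Fintype.card_fin, one_smul,
          Finset.prod_const]
        by_cases hj : j ∈ S
        · simp [hf_def, hj]
        · simp [hf_def, hj, zero_pow hm1.ne']
      simp only [this]
      rw [Finset.sum_ite_mem, Finset.univ_inter, Finset.sum_const, hScard, ham, nsmul_eq_mul]
      exact mul_inv_cancel₀ (ne_of_gt hω0)
    · -- value
      unfold tInner
      simp only [mul_one, Finset.sum_const, Finset.card_univ, Fintype.card_fin, one_smul]
      rw [← pow_sum_eq f]
      have hsum : ∑ j, f j = (ω : ℝ) * a := by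
        rw [hf_def]
        rw [Finset.sum_ite_mem, Finset.univ_inter, Finset.sum_const, hScard, nsmul_eq_mul]
      rw [hsum, mul_pow, ham]
      have : (ω : ℝ) ^ m = (ω : ℝ) ^ (m - 1) * (ω : ℝ) := by
        rw [← pow_succ]
        congr 1
        omega
      rw [this, mul_assoc, mul_inv_cancel₀ (ne_of_gt hω0), mul_one]
  · -- upper bound
    rintro v ⟨X, ⟨N, u, hu, hX⟩, hedge, hdiag, rfl⟩
    -- each support is a coclique
    have hsupp : ∀ p : Fin N,
        (Finset.univ.filter (fun j => u p j ≠ 0)).card ≤ ω := by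
      intro p
      apply hω.2
      refine ⟨_, ?_, rfl⟩
      intro T hT hTc hTE
      set i : Fin m → Fin n := fun t => ((T.orderIsoOfFin hTc) t : Fin n) with hi_def
      have himg : Finset.image i Finset.univ = T := image_orderIso T hTc
      have hX0 : X i = 0 := hedge i (by rw [himg]; exact hTE)
      rw [hX i] at hX0
      have hterm : ∏ t, u p (i t) = 0 := by
        have := (Finset.sum_eq_zero_iff_of_nonneg (fun q _ =>
          Finset.prod_nonneg fun t _ => hu q (i t))).mp hX0 p (Finset.mem_univ p)
        exact this
      obtain ⟨t, _, ht⟩ := Finset.prod_eq_zero_iff.mp hterm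
      have hmem : i t ∈ T := by rw [← himg]; exact Finset.mem_image_of_mem _ (Finset.mem_univ t)
      have := hT hmem
      simp only [Finset.mem_filter] at this
      exact this.2 ht
    -- trace = 1 rewritten
    rw [tInner_idT hm1] at hdiag
    have hdiag' : ∑ p, ∑ j, u p j ^ m = 1 := by
      rw [← hdiag, Finset.sum_comm]
      apply Finset.sum_congr rfl
      intro j _
      rw [hX]
      apply Finset.sum_congr rfl
      intro p _
      rw [Finset.prod_const, Finset.card_univ, Fintype.card_fin]
    -- value
    have hval : tInner X (fun _ => 1) = ∑ p, (∑ j, u p j) ^ m := by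
      unfold tInner
      simp only [mul_one]
      rw [Finset.sum_congr rfl (fun i _ => hX i), Finset.sum_comm]
      exact Finset.sum_congr rfl fun p _ => (pow_sum_eq (u p)).symm
    rw [hval]
    calc ∑ p, (∑ j, u p j) ^ m
        ≤ ∑ p, (ω : ℝ) ^ (m - 1) * ∑ j, u p j ^ m :=
          Finset.sum_le_sum fun p _ => key_ineq m ω hm1 (u p) (hu p) (hsupp p)
      _ = (ω : ℝ) ^ (m - 1) := by rw [← Finset.mul_sum, hdiag', mul_one]
end

section
/- Let G = (V, E) be a nontrivial m-uniform hypergraph with |V| = n, where m ≥ 3 and n ≥ m, let ω(G) be its coclique number, and let A be its adjacency tensor. Then for every real number λ such that the tensor λ(A + I) − E_tensor is copositive, one has ω(G)^{m−1} ≤ λ; in particular ω(G)^{m−1} ≤ min{λ ∈ ℕ : λ(A + I) − E_tensor is copositive} whenever this set is nonempty. -/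
open scoped BigOperators

/-- The adjacency tensor of an `m`-uniform hypergraph with edge set `E`:
entry `1/(m-1)!` if the index set is an edge, `0` otherwise. -/
noncomputable def adjTensor (m n : ℕ) (E : Finset (Finset (Fin n))) : (Fin m → Fin n) → ℝ :=
  fun i => if Finset.image i Finset.univ ∈ E then 1 / (Nat.factorial (m - 1) : ℝ) else 0

theorem stmt15 (m n : ℕ) (hm : 3 ≤ m) (hn : m ≤ n)
    (E : Finset (Finset (Fin n))) (hunif : ∀ e ∈ E, e.card = m) (hne : E.Nonempty)
    (ω : ℕ)
    (hω : IsGreatest {k | ∃ S : Finset (Fin n), IsCoclique m E S ∧ S.card = k} ω) :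
    (∀ lam : ℝ,
        Copositive (fun i => lam * (adjTensor m n E i + idT m n i) - 1) →
        (ω : ℝ) ^ (m - 1) ≤ lam) ∧
      (∀ _hne : {lam : ℕ |
            Copositive (fun i => (lam : ℝ) * (adjTensor m n E i + idT m n i) - 1)}.Nonempty,
        (ω : ℝ) ^ (m - 1) ≤
          (Nat.cast (sInf {lam : ℕ |
            Copositive (fun i => (lam : ℝ) * (adjTensor m n E i + idT m n i) - 1)}) : ℝ)) := by
  obtain ⟨⟨S, hS, hScard⟩, hub⟩ := hω
  have hmpos : 0 < m := by omega
  have hω1 : 1 ≤ ω := by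
    refine hub ⟨{⟨0, by omega⟩}, ?_, by simp⟩
    intro T hT hTcard _
    have := Finset.card_le_card hT
    simp at this
    omega
  have key : ∀ lam : ℝ,
      Copositive (fun i => lam * (adjTensor m n E i + idT m n i) - 1) →
      (ω : ℝ) ^ (m - 1) ≤ lam := by
    intro lam hcop
    set x : Fin n → ℝ := fun j => if j ∈ S then 1 else 0 with hx
    have hxnn : ∀ j, 0 ≤ x j := by
      intro j; simp only [hx]; split <;> norm_num
    have h0 := hcop x hxnn
    have hsum : (∑ j, x j) = (ω : ℝ) := by
      simp only [hx, Finset.sum_ite_mem, Finset.univ_inter, Finset.sum_const,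
        nsmul_eq_mul, mul_one]
      exact_mod_cast congrArg Nat.cast hScard
    have hA : tApply (adjTensor m n E) x = 0 := by
      unfold tApply
      apply Finset.sum_eq_zero
      intro i _
      by_cases h : Finset.image i Finset.univ ∈ E
      · by_cases hsub : ∀ t, i t ∈ S
        · exfalso
          refine hS (Finset.image i Finset.univ) ?_ (hunif _ h) h
          intro a ha
          obtain ⟨t, _, rfl⟩ := Finset.mem_image.mp ha
          exact hsub t
        · obtain ⟨t, ht⟩ := not_forall.mp hsub
          have : ∏ t, x (i t) = 0 :=
            Finset.prod_eq_zero (Finset.mem_univ t) (by simp [hx, ht])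
          simp [this]
      · simp [adjTensor, h]
    have hI : tApply (idT m n) x = (ω : ℝ) := by
      have h1 : tApply (idT m n) x = ∑ j : Fin n, x j ^ m := by
        unfold tApply idT
        rw [Finset.sum_congr rfl (fun i _ => by rw [ite_mul, one_mul, zero_mul]),
          ← Finset.sum_filter]
        refine Finset.sum_nbij' (fun i => i ⟨0, hmpos⟩) (fun j => fun _ => j)
          ?_ ?_ ?_ ?_ ?_
        · intro a _; exact Finset.mem_univ _
        · intro j _
          simp only [Finset.mem_filter, Finset.mem_univ, true_and]
          intro s t; trivial
        · intro a ha
          simp only [Finset.mem_filter] at ha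
          funext t; exact ha.2 ⟨0, hmpos⟩ t
        · intro j _; rfl
        · intro a ha
          simp only [Finset.mem_filter] at ha
          rw [Finset.prod_congr rfl (fun t _ => by rw [ha.2 t ⟨0, hmpos⟩])]
          rw [Finset.prod_const, Finset.card_univ, Fintype.card_fin]
      rw [h1, ← hsum]
      apply Finset.sum_congr rfl
      intro j _
      simp only [hx]
      split
      · simp
      · simp [zero_pow hmpos.ne']
    have hE : tApply (fun _ : Fin m → Fin n => (1:ℝ)) x = (ω : ℝ) ^ m := by
      unfold tApply
      simp only [one_mul]
      rw [← hsum, ← Fin.prod_const m (∑ j, x j), Finset.prod_univ_sum,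
        Fintype.piFinset_univ]
    have hlin : tApply (fun i => lam * (adjTensor m n E i + idT m n i) - 1) x
        = lam * (tApply (adjTensor m n E) x + tApply (idT m n) x)
          - tApply (fun _ : Fin m → Fin n => (1:ℝ)) x := by
      unfold tApply
      rw [← Finset.sum_add_distrib, Finset.mul_sum, ← Finset.sum_sub_distrib]
      apply Finset.sum_congr rfl
      intro i _
      ring
    rw [hlin, hA, hI, hE] at h0
    have hωpos : (0:ℝ) < (ω : ℝ) := by exact_mod_cast hω1
    have hmω : (ω : ℝ) ^ m = (ω : ℝ) ^ (m - 1) * (ω : ℝ) := by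
      rw [← pow_succ]
      congr 1
      omega
    rw [zero_add, hmω] at h0
    have : (ω : ℝ) ^ (m - 1) * (ω : ℝ) ≤ lam * (ω : ℝ) := by linarith
    exact le_of_mul_le_mul_right this hωpos
  refine ⟨key, ?_⟩
  intro hne'
  exact key _ (Nat.sInf_mem hne')
end

section
/- Let G = (V, E) be a nontrivial m-uniform hypergraph with |V| = n, where m ≥ 3 and n ≥ m, let ω(G) be its coclique number, and let A be its adjacency tensor. If k is a positive integer such that the tensor k^{m−1}(A + I) − E_tensor is copositive, then ω(G) ≤ k. -/
open scoped BigOperators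

theorem stmt16 (m n : ℕ) (hm : 3 ≤ m) (hn : m ≤ n)
    (E : Finset (Finset (Fin n))) (hunif : ∀ e ∈ E, e.card = m) (hne : E.Nonempty)
    (ω : ℕ)
    (hω : IsGreatest {k | ∃ S : Finset (Fin n), IsCoclique m E S ∧ S.card = k} ω)
    (k : ℕ) (hk : 0 < k)
    (hcop : Copositive
      (fun i => (k : ℝ) ^ (m - 1) * (adjTensor m n E i + idT m n i) - 1)) :
    ω ≤ k := by
  classical
  obtain ⟨S, hS, hcard⟩ := hω.1
  have hm0 : 0 < m := by omega
  set x : Fin n → ℝ := fun j => if j ∈ S then 1 else 0 with hxdef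
  have hx0 : ∀ j, 0 ≤ x j := by
    intro j; simp only [hxdef]; split <;> norm_num
  have h := hcop x hx0
  rw [tApply] at h
  have hsplit : ∀ i : Fin m → Fin n,
      ((k : ℝ) ^ (m - 1) * (adjTensor m n E i + idT m n i) - 1) * ∏ t, x (i t)
      = (k : ℝ) ^ (m - 1) * (adjTensor m n E i * ∏ t, x (i t))
        + (k : ℝ) ^ (m - 1) * (idT m n i * ∏ t, x (i t)) - ∏ t, x (i t) := by
    intro i; ring
  simp only [hsplit] at h
  rw [Finset.sum_sub_distrib, Finset.sum_add_distrib, ← Finset.mul_sum, ← Finset.mul_sum] at h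
  -- the adjacency part vanishes since S is a coclique
  have hA : ∑ i : Fin m → Fin n, adjTensor m n E i * ∏ t, x (i t) = 0 := by
    apply Finset.sum_eq_zero
    intro i _
    by_cases hi : Finset.image i Finset.univ ∈ E
    · have hnot : ¬ ∀ t, i t ∈ S := by
        intro hall
        have hsub : Finset.image i Finset.univ ⊆ S := by
          intro a ha
          obtain ⟨t, _, rfl⟩ := Finset.mem_image.mp ha
          exact hall t
        exact hS _ hsub (hunif _ hi) hi
      push_neg at hnot
      obtain ⟨t, ht⟩ := hnot
      have hzero : x (i t) = 0 := by simp [hxdef, ht]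
      rw [Finset.prod_eq_zero (Finset.mem_univ t) hzero, mul_zero]
    · simp [adjTensor, hi]
  have hxsum : ∑ j, x j = (ω : ℝ) := by
    simp only [hxdef]
    rw [Finset.sum_ite_mem, Finset.univ_inter, Finset.sum_const, hcard]
    simp
  -- the identity part equals ω
  have hxm : ∀ j, x j ^ m = x j := by
    intro j
    simp only [hxdef]
    split
    · exact one_pow m
    · exact zero_pow (by omega)
  have hI : ∑ i : Fin m → Fin n, idT m n i * ∏ t, x (i t) = (ω : ℝ) := by
    have key : ∀ i : Fin m → Fin n, idT m n i * ∏ t, x (i t)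
        = ∑ j : Fin n, if i = fun _ => j then x j ^ m else 0 := by
      intro i
      by_cases hconst : ∀ s t : Fin m, i s = i t
      · have hieq : i = fun _ => i ⟨0, hm0⟩ := funext fun s => hconst s ⟨0, hm0⟩
        rw [Finset.sum_eq_single (i ⟨0, hm0⟩)]
        · rw [if_pos hieq, idT, if_pos hconst, one_mul]
          conv_lhs => rw [hieq]
          rw [Finset.prod_const, Finset.card_univ, Fintype.card_fin]
        · intro j _ hj
          rw [if_neg]
          intro hij
          exact hj ((congrFun hij ⟨0, hm0⟩).symm)
        · intro habs; exact absurd (Finset.mem_univ _) habs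
      · rw [idT, if_neg hconst, zero_mul]
        symm
        apply Finset.sum_eq_zero
        intro j _
        rw [if_neg]
        intro hij
        exact hconst (fun s t => by rw [hij])
    rw [Finset.sum_congr rfl (fun i _ => key i), Finset.sum_comm]
    have : ∀ j : Fin n, (∑ i : Fin m → Fin n, if i = fun _ => j then x j ^ m else 0)
        = x j ^ m := by
      intro j
      rw [Finset.sum_ite_eq' Finset.univ (fun _ => j) (fun _ => x j ^ m)]
      simp
    rw [Finset.sum_congr rfl (fun j _ => this j)]
    simp only [hxm]
    exact hxsum
  -- the all-ones part equals ω^m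
  have hE : ∑ i : Fin m → Fin n, ∏ t, x (i t) = (ω : ℝ) ^ m := by
    rw [← hxsum, Finset.sum_pow' Finset.univ x m, Fintype.piFinset_univ]
  rw [hA, hI, hE, mul_zero, zero_add] at h
  -- conclude
  have hkey : (ω : ℝ) ^ m ≤ (k : ℝ) ^ (m - 1) * (ω : ℝ) := by linarith
  rcases Nat.eq_zero_or_pos ω with hω0 | hωpos
  · omega
  · have hωR : (0 : ℝ) < (ω : ℝ) := by exact_mod_cast hωpos
    have hmsplit : (ω : ℝ) ^ m = (ω : ℝ) ^ (m - 1) * (ω : ℝ) := by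
      rw [← pow_succ]
      congr 1
      omega
    rw [hmsplit] at hkey
    have hpow : (ω : ℝ) ^ (m - 1) ≤ (k : ℝ) ^ (m - 1) :=
      le_of_mul_le_mul_right hkey hωR
    have : (ω : ℝ) ≤ (k : ℝ) := by
      have h1 : (0 : ℝ) ≤ (ω : ℝ) := le_of_lt hωR
      have h2 : (0 : ℝ) ≤ (k : ℝ) := by positivity
      exact (pow_le_pow_iff_left₀ h1 h2 (by omega)).mp hpow
    exact_mod_cast this
end
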